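/- arXiv:1012.3348 — 9 statements merged into one kernel-verified Lean document; each statement's English description precedes it below -/
import Mathlib

section
/- Let A be a Banach algebra, B a Banach A-bimodule, n ≥ 2 an even integer, 0 ≤ r ≤ n/2, and φ ∈ U_{n,r}. Then φ belongs to the left topological center Z^ℓ_{B^(n)}(U_{n,r}) if and only if for every b^(n-1) ∈ B^(n-1) the functional b^(n-1)φ on B^(n), defined by ⟨b^(n-1)φ, b^(n)⟩ = ⟨b^(n-1), φ b^(n)⟩ for b^(n) ∈ B^(n), is weak*-continuous on B^(n), i.e. b^(n-1)φ lies in the canonical image of B^(n-1) inside B^(n+1). -/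
/-!
Common infrastructure for formalizing "Topological centers of the n-th dual of
module actions" (Haghnejad Azar, Riazi).

We work over `ℝ`.  A Banach algebra is a complete `NonUnitalNormedRing` which is
a normed `ℝ`-algebra; a Banach `A`-bimodule `B` is given by two continuous
bilinear module actions `πl : A →L B →L B`, `πr : B →L A →L B` satisfying the
usual associativity identities.

`BB` bundles a normed `ℝ`-space.  `BB.dual` is the topological dual,
`BB.bst` is the Arens adjoint `m ↦ m^*` of a bounded bilinear map
(`⟨m^*(z',x), y⟩ = ⟨z', m(x,y)⟩`), `BB.arens m = m^{***}` is the first Arens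
extension, `BB.diter E k` is the `2k`-th dual of `E`, and `BB.iterBil m k` is
the `k`-fold iterated first Arens extension of `m` acting on `2k`-th duals.

Even integers `n ≥ 0` (resp. `n ≥ 2`) are represented as `n = 2*k`
(resp. `n = 2*(j+1)`), so that `A^{(n)}` is `Ad A k`, `A^{(n+1)}` is
`((BB.of A).diter k).dual.carrier`, etc.

Weak-star and weak convergence of nets are expressed through filters
(`wsTendsto`, `wTendsto`), and the relevant topological centers and `wap`
spaces become the predicates `MemZlBA`, `MemZlAB`, `MemWapL` below.
-/

noncomputable section

/-- A bundled normed real vector space. -/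
structure BB : Type 1 where
  carrier : Type
  [grp : NormedAddCommGroup carrier]
  [mod : NormedSpace ℝ carrier]

attribute [instance] BB.grp BB.mod

open ContinuousLinearMap Filter Topology Bornology

/-- Bundle a normed space. -/
abbrev BB.of (X : Type) [NormedAddCommGroup X] [NormedSpace ℝ X] : BB := ⟨X⟩

/-- The (topological) dual space. -/
abbrev BB.dual (E : BB) : BB := ⟨E.carrier →L[ℝ] ℝ⟩

/-- Bounded bilinear maps `E × F → G`. -/
abbrev BB.Bil (E F G : BB) : Type := E.carrier →L[ℝ] F.carrier →L[ℝ] G.carrier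

/-- The Arens adjoint `m^*` of a bounded bilinear map `m : X × Y → Z`:
`⟨m^*(z', x), y⟩ = ⟨z', m(x, y)⟩`. -/
def BB.bst {E F G : BB} (m : BB.Bil E F G) : BB.Bil G.dual E F.dual :=
  ((ContinuousLinearMap.compL ℝ E.carrier (F.carrier →L[ℝ] G.carrier)
      (F.carrier →L[ℝ] ℝ)).flip m).comp
    (ContinuousLinearMap.compL ℝ F.carrier G.carrier ℝ)

/-- The first Arens extension `m^{***} = ((m^*)^*)^*` of a bounded bilinear map. -/
def BB.arens {E F G : BB} (m : BB.Bil E F G) :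
    BB.Bil E.dual.dual F.dual.dual G.dual.dual :=
  BB.bst (BB.bst (BB.bst m))

/-- The canonical embedding of a normed space into its double dual. -/
def BB.incl (E : BB) : E.carrier →L[ℝ] E.dual.dual.carrier :=
  (ContinuousLinearMap.id ℝ (E.carrier →L[ℝ] ℝ)).flip

/-- The adjoint of a continuous linear map. -/
def BB.adj {E F : BB} (f : E.carrier →L[ℝ] F.carrier) :
    F.dual.carrier →L[ℝ] E.dual.carrier :=
  (ContinuousLinearMap.compL ℝ E.carrier F.carrier ℝ).flip f

/-- `E.diter k` is the `2k`-th dual of `E`. -/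
@[reducible] def BB.diter (E : BB) : ℕ → BB
  | 0 => E
  | k + 1 => ((BB.diter E k).dual).dual

/-- The `k`-fold iterated first Arens extension of `m` to the `2k`-th duals. -/
@[reducible] def BB.iterBil {E F G : BB} (m : BB.Bil E F G) :
    ∀ k : ℕ, BB.Bil (E.diter k) (F.diter k) (G.diter k)
  | 0 => m
  | k + 1 => BB.arens (BB.iterBil m k)

/-- Weak-star convergence of a net of functionals (nets are encoded as maps
together with a filter on the index type). -/
def wsTendsto {E : BB} {ι : Type} (l : Filter ι) (f : ι → E.dual.carrier)
    (g : E.dual.carrier) : Prop :=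
  ∀ x : E.carrier, Tendsto (fun i => f i x) l (𝓝 (g x))

/-- Weak convergence of a net. -/
def wTendsto {E : BB} {ι : Type} (l : Filter ι) (f : ι → E.carrier)
    (g : E.carrier) : Prop :=
  ∀ ψ : E.dual.carrier, Tendsto (fun i => ψ (f i)) l (𝓝 (ψ g))

/-- A set is relatively weakly compact if its closure in the weak topology is
compact. -/
def RelWeaklyCompact {E : BB} (s : Set E.carrier) : Prop :=
  IsCompact (closure (toWeakSpace ℝ E.carrier '' s))

section Setup

variable (A B : Type) [NonUnitalNormedRing A] [NormedSpace ℝ A] [IsScalarTower ℝ A A]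
  [SMulCommClass ℝ A A] [NormedAddCommGroup B] [NormedSpace ℝ B]

/-- `A^{(2k)}`, the `2k`-th dual of `A`. -/
abbrev Ad (k : ℕ) : Type := ((BB.of A).diter k).carrier

/-- `B^{(2k)}`, the `2k`-th dual of `B`. -/
abbrev Bd (k : ℕ) : Type := ((BB.of B).diter k).carrier

variable (πl : A →L[ℝ] B →L[ℝ] B) (πr : B →L[ℝ] A →L[ℝ] B)

/-- The iterated (first Arens extension of the) left module action
`A^{(2k)} × B^{(2k)} → B^{(2k)}`. -/
abbrev actL (k : ℕ) :
    ((BB.of A).diter k).carrier →L[ℝ] ((BB.of B).diter k).carrier →L[ℝ]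
      ((BB.of B).diter k).carrier :=
  BB.iterBil (E := BB.of A) (F := BB.of B) (G := BB.of B) πl k

/-- The iterated (first Arens extension of the) right module action
`B^{(2k)} × A^{(2k)} → B^{(2k)}`. -/
abbrev actR (k : ℕ) :
    ((BB.of B).diter k).carrier →L[ℝ] ((BB.of A).diter k).carrier →L[ℝ]
      ((BB.of B).diter k).carrier :=
  BB.iterBil (E := BB.of B) (F := BB.of A) (G := BB.of B) πr k

/-- The iterated first Arens product on `A^{(2k)}`. -/
abbrev mulA (k : ℕ) :
    ((BB.of A).diter k).carrier →L[ℝ] ((BB.of A).diter k).carrier →L[ℝ]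
      ((BB.of A).diter k).carrier :=
  BB.iterBil (E := BB.of A) (F := BB.of A) (G := BB.of A) (ContinuousLinearMap.mul ℝ A) k

/-- `a ∈ Z^ℓ_{B^{(2k+2)}}(A^{(2k+2)})`: the map `b ↦ a b` on `B^{(2k+2)}` is
weak-star to weak-star continuous. -/
def MemZlBA (k : ℕ) (a : Ad A (k + 1)) : Prop :=
  ∀ {ι : Type} (l : Filter ι), l.NeBot →
    ∀ (bα : ι → Bd B (k + 1)) (b : Bd B (k + 1)),
      wsTendsto (E := ((BB.of B).diter k).dual) l bα b →
      wsTendsto (E := ((BB.of B).diter k).dual) l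
        (fun i => actL A B πl (k + 1) a (bα i)) (actL A B πl (k + 1) a b)

/-- `b ∈ Z^ℓ_{A^{(2k+2)}}(B^{(2k+2)})`: the map `a ↦ b a` from `A^{(2k+2)}` to
`B^{(2k+2)}` is weak-star to weak-star continuous. -/
def MemZlAB (k : ℕ) (b : Bd B (k + 1)) : Prop :=
  ∀ {ι : Type} (l : Filter ι), l.NeBot →
    ∀ (aα : ι → Ad A (k + 1)) (a : Ad A (k + 1)),
      wsTendsto (E := ((BB.of A).diter k).dual) l aα a →
      wsTendsto (E := ((BB.of B).diter k).dual) l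
        (fun i => actR A B πr (k + 1) b (aα i)) (actR A B πr (k + 1) b a)

/-- `b1 ∈ wap_ℓ(B^{(2k)}) ⊆ B^{(2k+1)}`:
`⟨b2 ⬝ aα, b1⟩ → ⟨b2 ⬝ a2, b1⟩` whenever `aα → a2` weak-star in `A^{(2k+2)}`. -/
def MemWapL (k : ℕ) (b1 : ((BB.of B).diter k).dual.carrier) : Prop :=
  ∀ (b2 : Bd B (k + 1)),
    ∀ {ι : Type} (l : Filter ι), l.NeBot →
      ∀ (aα : ι → Ad A (k + 1)) (a2 : Ad A (k + 1)),
        wsTendsto (E := ((BB.of A).diter k).dual) l aα a2 →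
        Tendsto (fun i => actR A B πr (k + 1) b2 (aα i) b1) l
          (𝓝 (actR A B πr (k + 1) b2 a2 b1))

end Setup


lemma wstar_rep {X : Type*} [NormedAddCommGroup X] [NormedSpace ℝ X]
    (f : (X →L[ℝ] ℝ) →L[ℝ] ℝ)
    (hf : Continuous fun ψ : WeakDual ℝ X => f ψ) :
    ∃ x : X, ∀ ψ : X →L[ℝ] ℝ, f ψ = ψ x := by
  classical
  -- the seminorm |f| on the weak dual is continuous
  let q : Seminorm ℝ (WeakDual ℝ X) :=
    (normSeminorm ℝ ℝ).comp (f.toLinearMap : WeakDual ℝ X →ₗ[ℝ] ℝ)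
  have hq : Continuous q := by
    have : Continuous fun ψ : WeakDual ℝ X => ‖f ψ‖ := hf.norm
    exact this
  obtain ⟨s, C, hC0, hC⟩ := Seminorm.bound_of_continuous
    (LinearMap.weakBilin_withSeminorms (topDualPairing ℝ X)) q hq
  -- kernel inclusion
  let L : s → (X →L[ℝ] ℝ) →ₗ[ℝ] ℝ := fun x => (topDualPairing ℝ X).flip (x : X)
  have hker : ⨅ i : s, LinearMap.ker (L i) ≤ LinearMap.ker (f.toLinearMap) := by
    intro ψ hψ
    have hz : ∀ i : s, ψ (i : X) = 0 := by
      intro i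
      have := (Submodule.mem_iInf _).1 hψ i
      simpa [L, LinearMap.mem_ker, topDualPairing] using this
    have hsup : (s.sup (LinearMap.toSeminormFamily (topDualPairing ℝ X))) ψ ≤ 0 := by
      apply Seminorm.finset_sup_apply_le le_rfl
      intro i hi
      simp [LinearMap.toSeminormFamily_apply, topDualPairing, hz ⟨i, hi⟩]
    have h1 : q ψ ≤ (C : ℝ) * (s.sup (LinearMap.toSeminormFamily (topDualPairing ℝ X))) ψ := by
      exact hC ψ
    have h2 : q ψ ≤ 0 := h1.trans (mul_nonpos_of_nonneg_of_nonpos C.coe_nonneg hsup)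
    have h3 : q ψ = 0 := le_antisymm h2 (apply_nonneg q ψ)
    have h4 : ‖f ψ‖ = 0 := h3
    simpa [LinearMap.mem_ker] using norm_eq_zero.mp h4
  have hspan := mem_span_of_iInf_ker_le_ker (L := L) hker
  obtain ⟨c, hc⟩ := (Submodule.mem_span_range_iff_exists_fun ℝ).1 hspan
  refine ⟨∑ i : s, c i • (i : X), fun ψ => ?_⟩
  have := congrArg (fun g : (X →L[ℝ] ℝ) →ₗ[ℝ] ℝ => g ψ) hc
  simp only [LinearMap.coe_sum, Finset.sum_apply, LinearMap.smul_apply] at this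
  have h2 : f ψ = ∑ x : s, c x • (L x) ψ := this.symm
  rw [h2]
  simp [L, topDualPairing, map_sum, mul_comm]

/-- (`n = 2*(j+1) ≥ 2` even, `0 ≤ r ≤ n/2 = j+1`.)
`B^{(n)}` is a Banach `U_{n,r}`-bimodule; since the paper realizes `U_{n,r}`
(which is `(A^{(n-r)}A^{(r)})^{(r)}` for `r` even and `(A^{(n-r)}A^{(r-1)})^{(r)}`
for `r` odd) as a subalgebra of `A^{(n)}`, acting on `B^{(n)}` via the iterated
first Arens extension of the module action, we formalize the statement for an
arbitrary multiplicatively closed subset `U` of `A^{(n)}` (this is a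
generalization covering each concrete `U_{n,r}`).  For `φ ∈ U_{n,r}`:
`φ ∈ Z^ℓ_{B^{(n)}}(U_{n,r})` iff for every `b^{(n-1)} ∈ B^{(n-1)}` the functional
`b^{(n-1)} φ : b^{(n)} ↦ ⟨b^{(n-1)}, φ b^{(n)}⟩` on `B^{(n)}` lies in the
canonical image of `B^{(n-1)}` in `B^{(n+1)}` (equivalently, is weak-star
continuous). -/
theorem stmt0
    (A B : Type) [NonUnitalNormedRing A] [NormedSpace ℝ A] [IsScalarTower ℝ A A]
    [SMulCommClass ℝ A A] [CompleteSpace A]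
    [NormedAddCommGroup B] [NormedSpace ℝ B] [CompleteSpace B]
    (πl : A →L[ℝ] B →L[ℝ] B) (πr : B →L[ℝ] A →L[ℝ] B)
    (hπl : ∀ (a a' : A) (b : B), πl (a * a') b = πl a (πl a' b))
    (hπr : ∀ (b : B) (a a' : A), πr b (a * a') = πr (πr b a) a')
    (hπlr : ∀ (a : A) (b : B) (a' : A), πr (πl a b) a' = πl a (πr b a'))
    (j r : ℕ) (hr : r ≤ j + 1)
    (U : Set (Ad A (j + 1)))
    (hUmul : ∀ x ∈ U, ∀ y ∈ U, mulA A (j + 1) x y ∈ U)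
    (φ : Ad A (j + 1)) (hφ : φ ∈ U) :
    (φ ∈ U ∧ MemZlBA A B πl j φ) ↔
      ∀ bm : ((BB.of B).diter j).dual.carrier,
        ∃ bm' : ((BB.of B).diter j).dual.carrier,
          BB.incl ((BB.of B).diter j).dual bm' =
            (BB.incl ((BB.of B).diter j).dual bm).comp (actL A B πl (j + 1) φ) := by
  constructor
  · rintro ⟨-, hZ⟩ bm
    let f : (((BB.of B).diter j).dual.carrier →L[ℝ] ℝ) →L[ℝ] ℝ :=
      (BB.incl ((BB.of B).diter j).dual bm).comp (actL A B πl (j + 1) φ)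
    have hf : Continuous fun ψ : WeakDual ℝ ((BB.of B).diter j).dual.carrier => f ψ := by
      rw [continuous_iff_continuousAt]
      intro ψ
      have hnet : wsTendsto (E := ((BB.of B).diter j).dual) (𝓝 ψ)
          (fun χ : WeakDual ℝ ((BB.of B).diter j).dual.carrier =>
            (χ : ((BB.of B).diter j).dual.carrier →L[ℝ] ℝ))
          (ψ : ((BB.of B).diter j).dual.carrier →L[ℝ] ℝ) := by
        intro x
        exact (WeakBilin.eval_continuous
          (topDualPairing ℝ ((BB.of B).diter j).dual.carrier) x).tendsto ψ
      exact hZ (𝓝 ψ) inferInstance _ _ hnet bm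
    obtain ⟨x, hx⟩ := wstar_rep f hf
    exact ⟨x, by ext ψ; exact (hx ψ).symm⟩
  · intro h
    refine ⟨hφ, ?_⟩
    intro ι l hl bα b hb x
    obtain ⟨bm', hbm'⟩ := h x
    have key : ∀ ψ : Bd B (j + 1), actL A B πl (j + 1) φ ψ x = ψ bm' := fun ψ =>
      (congrArg (fun g : Bd B (j + 1) →L[ℝ] ℝ => g ψ) hbm').symm
    have heq : (fun i => actL A B πl (j + 1) φ (bα i) x) = fun i => bα i bm' :=
      funext fun i => key (bα i)
    rw [heq, key b]
    exact hb bm'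
end
end

section
/- Let A be a Banach algebra, B a Banach A-bimodule, n ≥ 2 an even integer, and 0 ≤ r ≤ n/2. If φ ∈ Z^ℓ_{B^(n)}(U_{n,r}), then a^(n-2)φ ∈ Z^ℓ_{B^(n)}(A^(n)) for every a^(n-2) ∈ A^(n-2), where a^(n-2)φ is the product of a^(n-2) (canonically embedded in A^(n)) with φ in A^(n). -/
/-!
Common infrastructure for formalizing "Topological centers of the n-th dual of
module actions" (Haghnejad Azar, Riazi).

We work over `ℝ`.  A Banach algebra is a complete `NonUnitalNormedRing` which is
a normed `ℝ`-algebra; a Banach `A`-bimodule `B` is given by two continuous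
bilinear module actions `πl : A →L B →L B`, `πr : B →L A →L B` satisfying the
usual associativity identities.

`BB` bundles a normed `ℝ`-space.  `BB.dual` is the topological dual,
`BB.bst` is the Arens adjoint `m ↦ m^*` of a bounded bilinear map
(`⟨m^*(z',x), y⟩ = ⟨z', m(x,y)⟩`), `BB.arens m = m^{***}` is the first Arens
extension, `BB.diter E k` is the `2k`-th dual of `E`, and `BB.iterBil m k` is
the `k`-fold iterated first Arens extension of `m` acting on `2k`-th duals.

Even integers `n ≥ 0` (resp. `n ≥ 2`) are represented as `n = 2*k`
(resp. `n = 2*(j+1)`), so that `A^{(n)}` is `Ad A k`, `A^{(n+1)}` is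
`((BB.of A).diter k).dual.carrier`, etc.

Weak-star and weak convergence of nets are expressed through filters
(`wsTendsto`, `wTendsto`), and the relevant topological centers and `wap`
spaces become the predicates `MemZlBA`, `MemZlAB`, `MemWapL` below.
-/

noncomputable section

open ContinuousLinearMap Filter Topology Bornology

lemma BB.bst_apply {E F G : BB} (m : BB.Bil E F G) (z' : G.dual.carrier)
    (x : E.carrier) (y : F.carrier) : BB.bst m z' x y = z' (m x y) := rfl

lemma BB.arens_incl_apply {E F : BB} (m : BB.Bil E F F) (x : E.carrier)
    (H : F.dual.dual.carrier) (f : F.dual.carrier) :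
    BB.arens m (BB.incl E x) H f = H (BB.bst m f x) := rfl

lemma BB.arens_assoc {E F : BB} (p : BB.Bil E E E) (m : BB.Bil E F F)
    (h : ∀ a a' b, m (p a a') b = m a (m a' b))
    (a a' : E.dual.dual.carrier) (b : F.dual.dual.carrier) :
    BB.arens m (BB.arens p a a') b = BB.arens m a (BB.arens m a' b) := by
  have key1 : ∀ (f : F.dual.carrier) (a₀ a₁ : E.carrier),
      BB.bst m f (p a₀ a₁) = BB.bst m (BB.bst m f a₀) a₁ := by
    intro f a₀ a₁
    ext b₀
    exact congrArg f (h a₀ a₁ b₀)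
  have key2 : ∀ (f : F.dual.carrier) (a₀ : E.carrier),
      BB.bst p (BB.bst (BB.bst m) b f) a₀ =
        BB.bst (BB.bst m) b (BB.bst m f a₀) := by
    intro f a₀
    ext a₁
    exact congrArg b (key1 f a₀ a₁)
  have key3 : ∀ f : F.dual.carrier,
      BB.bst (BB.bst p) a' (BB.bst (BB.bst m) b f) =
        BB.bst (BB.bst m) (BB.arens m a' b) f := by
    intro f
    ext a₀
    exact congrArg a' (key2 f a₀)
  ext f
  exact congrArg a (key3 f)

lemma BB.iterBil_assoc {E F : BB} (p : BB.Bil E E E) (m : BB.Bil E F F)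
    (h : ∀ a a' b, m (p a a') b = m a (m a' b)) :
    ∀ (k : ℕ) (a a' : (E.diter k).carrier) (b : (F.diter k).carrier),
      BB.iterBil m k (BB.iterBil p k a a') b =
        BB.iterBil m k a (BB.iterBil m k a' b) := by
  intro k
  induction k with
  | zero => exact h
  | succ k ih => exact BB.arens_assoc (BB.iterBil p k) (BB.iterBil m k) ih

/-- (`n = 2*(j+1) ≥ 2` even, `0 ≤ r ≤ n/2 = j+1`; as in
Statement 0, the subalgebra `U_{n,r}` of `A^{(n)}` is abstracted into an
arbitrary multiplicatively closed subset `U` of `A^{(n)}`.)  If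
`φ ∈ Z^ℓ_{B^{(n)}}(U_{n,r})` then for every `a^{(n-2)} ∈ A^{(n-2)}` the product
`a^{(n-2)} φ` (the first Arens product in `A^{(n)}` of the canonical image of
`a^{(n-2)}` with `φ`) lies in `Z^ℓ_{B^{(n)}}(A^{(n)})`. -/
theorem stmt2
    (A B : Type) [NonUnitalNormedRing A] [NormedSpace ℝ A] [IsScalarTower ℝ A A]
    [SMulCommClass ℝ A A] [CompleteSpace A]
    [NormedAddCommGroup B] [NormedSpace ℝ B] [CompleteSpace B]
    (πl : A →L[ℝ] B →L[ℝ] B) (πr : B →L[ℝ] A →L[ℝ] B)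
    (hπl : ∀ (a a' : A) (b : B), πl (a * a') b = πl a (πl a' b))
    (hπr : ∀ (b : B) (a a' : A), πr b (a * a') = πr (πr b a) a')
    (hπlr : ∀ (a : A) (b : B) (a' : A), πr (πl a b) a' = πl a (πr b a'))
    (j r : ℕ) (hr : r ≤ j + 1)
    (U : Set (Ad A (j + 1)))
    (hUmul : ∀ x ∈ U, ∀ y ∈ U, mulA A (j + 1) x y ∈ U)
    (φ : Ad A (j + 1)) (hφ : φ ∈ U)
    (hZ : MemZlBA A B πl j φ) :
    ∀ a : Ad A j,
      MemZlBA A B πl j (mulA A (j + 1) (BB.incl ((BB.of A).diter j) a) φ) := by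
  intro a ι l hl bα b hb x
  have h1 := hZ l hl bα b hb (BB.bst (actL A B πl j) x a)
  have key : ∀ c : Bd B (j + 1),
      actL A B πl (j + 1)
          (mulA A (j + 1) (BB.incl ((BB.of A).diter j) a) φ) c x =
        actL A B πl (j + 1) φ c (BB.bst (actL A B πl j) x a) := by
    intro c
    rw [BB.iterBil_assoc (ContinuousLinearMap.mul ℝ A) πl hπl (j + 1)
      (BB.incl ((BB.of A).diter j) a) φ c]
    exact BB.arens_incl_apply (actL A B πl j) a (actL A B πl (j + 1) φ c) x
  simpa only [key] using h1
end
end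

section
/- Let A be a Banach algebra, B a Banach A-bimodule, and n ≥ 0 an even integer such that every bounded subset of B^(n) is relatively weakly compact (equivalently, the closed unit ball of B^(n) is weakly compact). Suppose (e_α^(n)) is a bounded net in A^(n) with e_α^(n)b^(n) → b^(n) in norm for every b^(n) ∈ B^(n) (a bounded left approximate identity for B^(n)), and that e_α^(n)B^(n+2) ⊆ B^(n) for every α, where B^(n) is canonically embedded in B^(n+2). Then B is reflexive. -/
/-!
Common infrastructure for formalizing "Topological centers of the n-th dual of
module actions" (Haghnejad Azar, Riazi).

We work over `ℝ`.  A Banach algebra is a complete `NonUnitalNormedRing` which is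
a normed `ℝ`-algebra; a Banach `A`-bimodule `B` is given by two continuous
bilinear module actions `πl : A →L B →L B`, `πr : B →L A →L B` satisfying the
usual associativity identities.

`BB` bundles a normed `ℝ`-space.  `BB.dual` is the topological dual,
`BB.bst` is the Arens adjoint `m ↦ m^*` of a bounded bilinear map
(`⟨m^*(z',x), y⟩ = ⟨z', m(x,y)⟩`), `BB.arens m = m^{***}` is the first Arens
extension, `BB.diter E k` is the `2k`-th dual of `E`, and `BB.iterBil m k` is
the `k`-fold iterated first Arens extension of `m` acting on `2k`-th duals.

Even integers `n ≥ 0` (resp. `n ≥ 2`) are represented as `n = 2*k`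
(resp. `n = 2*(j+1)`), so that `A^{(n)}` is `Ad A k`, `A^{(n+1)}` is
`((BB.of A).diter k).dual.carrier`, etc.

Weak-star and weak convergence of nets are expressed through filters
(`wsTendsto`, `wTendsto`), and the relevant topological centers and `wap`
spaces become the predicates `MemZlBA`, `MemZlAB`, `MemWapL` below.
-/

noncomputable section

open ContinuousLinearMap Filter Topology Bornology

section Aux

open Filter Topology Bornology

private lemma incl_norm' (E : BB) (x : E.carrier) : ‖BB.incl E x‖ = ‖x‖ := by
  have h : BB.incl E x = NormedSpace.inclusionInDoubleDualLi ℝ (E := E.carrier) x := rfl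
  rw [h, (NormedSpace.inclusionInDoubleDualLi ℝ).norm_map]

private lemma diter_complete (E : BB) [CompleteSpace E.carrier] :
    ∀ j, CompleteSpace (E.diter j).carrier
  | 0 => ‹_›
  | j + 1 => by
      show CompleteSpace ((((E.diter j).dual).carrier) →L[ℝ] ℝ)
      infer_instance

private lemma desc (E : BB) [CompleteSpace E.carrier]
    (h : Function.Surjective (BB.incl E.dual)) : Function.Surjective (BB.incl E) := by
  intro F
  by_contra hF
  push_neg at hF
  have hFr : F ∉ Set.range (BB.incl E) := by
    rintro ⟨x, rfl⟩; exact hF x rfl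
  have hiso : Isometry (BB.incl E) :=
    AddMonoidHomClass.isometry_of_norm _ (incl_norm' E)
  have hclosed : IsClosed (Set.range (BB.incl E)) :=
    (hiso.isClosedEmbedding).isClosed_range
  have hconv : Convex ℝ (Set.range (BB.incl E)) := by
    rw [← Set.image_univ]
    exact convex_univ.linear_image (BB.incl E : E.carrier →ₗ[ℝ] E.dual.dual.carrier)
  obtain ⟨f, u, hfu, huf⟩ := geometric_hahn_banach_closed_point hconv hclosed hFr
  obtain ⟨φ, rfl⟩ := h f
  have hu0 : 0 < u := by
    have := hfu (BB.incl E 0) ⟨0, rfl⟩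
    simpa using this
  have hφ0 : ∀ x : E.carrier, φ x = 0 := by
    intro x
    by_contra hx
    have hlt : ∀ t : ℝ, t * φ x < u := by
      intro t
      have := hfu (BB.incl E (t • x)) ⟨_, rfl⟩
      have h' : φ (t • x) < u := this
      simpa [mul_comm] using h'
    have := hlt ((u + 1) / φ x)
    rw [div_mul_cancel₀ _ hx] at this
    linarith
  have hφ : φ = 0 := ContinuousLinearMap.ext fun x => by simp [hφ0 x]
  have : BB.incl E.dual φ F = F φ := rfl
  rw [this, hφ] at huf
  simp at huf
  linarith

private lemma down : ∀ (j : ℕ) (E : BB) [CompleteSpace E.carrier],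
    Function.Surjective (BB.incl (E.diter j)) → Function.Surjective (BB.incl E)
  | 0, _, _, h => h
  | j + 1, E, _, h => by
    haveI := diter_complete E j
    exact down j E (desc (E.diter j) (desc ((E.diter j).dual) h))

private lemma goldstine (E : BB) (F : E.dual.dual.carrier) (Φ : Finset E.dual.carrier)
    {ε : ℝ} (hε : 0 < ε) :
    ∃ x : E.carrier, ‖x‖ ≤ ‖F‖ + 1 ∧ ∀ φ ∈ Φ, |φ x - F φ| < ε := by
  classical
  set r : ℝ := ‖F‖ + 1 with hr
  have hr0 : 0 < r := by positivity
  have hFr : ‖F‖ < r := by rw [hr]; linarith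
  set T : E.carrier →L[ℝ] (Φ → ℝ) :=
    ContinuousLinearMap.pi (fun φ : Φ => (φ : E.dual.carrier)) with hT
  set c : Φ → ℝ := fun φ => F (φ : E.dual.carrier) with hc
  have hmem : c ∈ closure (T '' Metric.closedBall 0 r) := by
    by_contra hnot
    have hconv : Convex ℝ (closure (T '' Metric.closedBall 0 r)) :=
      ((convex_closedBall (0 : E.carrier) r).linear_image
        (T : E.carrier →ₗ[ℝ] (Φ → ℝ))).closure
    obtain ⟨f, u, hfu, huf⟩ :=
      geometric_hahn_banach_closed_point hconv isClosed_closure hnot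
    set lam : Φ → ℝ := fun i => f (fun j => if i = j then 1 else 0) with hlam
    set ψ : E.dual.carrier := ∑ i : Φ, lam i • (i : E.dual.carrier) with hψ
    have hfT : ∀ x : E.carrier, f (T x) = ψ x := by
      intro x
      have h1 := LinearMap.pi_apply_eq_sum_univ (f : (Φ → ℝ) →ₗ[ℝ] ℝ) (T x)
      simp only [ContinuousLinearMap.coe_coe] at h1
      rw [h1, hψ]
      simp only [ContinuousLinearMap.coe_sum', Finset.sum_apply,
        ContinuousLinearMap.coe_smul', Pi.smul_apply, smul_eq_mul]
      refine Finset.sum_congr rfl fun i _ => ?_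
      have : T x i = (i : E.dual.carrier) x := rfl
      rw [this, hlam, mul_comm]
    have hfc : f c = F ψ := by
      have h1 := LinearMap.pi_apply_eq_sum_univ (f : (Φ → ℝ) →ₗ[ℝ] ℝ) c
      simp only [ContinuousLinearMap.coe_coe] at h1
      rw [h1, hψ, map_sum]
      refine Finset.sum_congr rfl fun i _ => ?_
      rw [map_smul]
      simp [hc, hlam, smul_eq_mul, mul_comm]
    have hball : ∀ x : E.carrier, ‖x‖ ≤ r → ψ x < u := by
      intro x hx
      rw [← hfT x]
      exact hfu (T x) (subset_closure ⟨x, by simpa [Metric.mem_closedBall,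
        dist_zero_right] using hx, rfl⟩)
    have hu0 : 0 < u := by
      have := hball 0 (by simpa using hr0.le)
      simpa using this
    have hψn : ‖ψ‖ ≤ u / r := by
      refine ContinuousLinearMap.opNorm_le_bound _ (by positivity) fun x => ?_
      rcases eq_or_ne x 0 with rfl | hx
      · simp
      · have hnx : (0 : ℝ) < ‖x‖ := norm_pos_iff.2 hx
        have h1 : ψ ((r / ‖x‖) • x) < u := by
          apply hball
          rw [norm_smul, Real.norm_eq_abs, abs_of_pos (by positivity),
            div_mul_cancel₀ _ (ne_of_gt hnx)]
        have h2 : ψ (-((r / ‖x‖) • x)) < u := by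
          apply hball
          rw [norm_neg, norm_smul, Real.norm_eq_abs, abs_of_pos (by positivity),
            div_mul_cancel₀ _ (ne_of_gt hnx)]
        rw [map_neg] at h2
        rw [map_smul, smul_eq_mul] at h1 h2
        have habs : r / ‖x‖ * |ψ x| < u := by
          have := abs_lt.2 ⟨by linarith, h1⟩
          rwa [abs_mul, abs_of_pos (show (0:ℝ) < r / ‖x‖ by positivity)] at this
        have key : r / ‖x‖ * |ψ x| * ‖x‖ < u * ‖x‖ := mul_lt_mul_of_pos_right habs hnx
        have hcan : r / ‖x‖ * |ψ x| * ‖x‖ = |ψ x| * r := by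
          field_simp
        rw [Real.norm_eq_abs, div_mul_eq_mul_div, le_div_iff₀ hr0]
        rw [hcan] at key
        nlinarith [abs_nonneg (ψ x)]
    have hcontr : F ψ < u := by
      calc F ψ ≤ |F ψ| := le_abs_self _
        _ ≤ ‖F‖ * ‖ψ‖ := by rw [← Real.norm_eq_abs]; exact F.le_opNorm ψ
        _ ≤ ‖F‖ * (u / r) := mul_le_mul_of_nonneg_left hψn (norm_nonneg F)
        _ < r * (u / r) := mul_lt_mul_of_pos_right hFr (by positivity)
        _ = u := by field_simp
    rw [hfc] at huf
    linarith
  rw [Metric.mem_closure_iff] at hmem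
  obtain ⟨v, ⟨x, hx, rfl⟩, hd⟩ := hmem ε hε
  refine ⟨x, by simpa [Metric.mem_closedBall, dist_zero_right] using hx, fun φ hφ => ?_⟩
  have := dist_le_pi_dist c (T x) ⟨φ, hφ⟩
  have hTx : T x ⟨φ, hφ⟩ = φ x := rfl
  have hcx : c ⟨φ, hφ⟩ = F φ := rfl
  rw [Real.dist_eq] at this
  rw [show |φ x - F φ| = |c ⟨φ, hφ⟩ - T x ⟨φ, hφ⟩| by rw [hTx, hcx, abs_sub_comm]]
  exact lt_of_le_of_lt this hd

private lemma surj_of_wc (E : BB)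
    (hwc : ∀ s : Set E.carrier, IsBounded s → RelWeaklyCompact (E := E) s) :
    Function.Surjective (BB.incl E) := by
  classical
  intro F
  set r : ℝ := ‖F‖ + 1 with hr
  set K := closure (toWeakSpace ℝ E.carrier '' Metric.closedBall 0 r) with hK
  have hKc : IsCompact K := hwc _ Metric.isBounded_closedBall
  have hch : ∀ d : Finset E.dual.carrier × ℕ, ∃ x : E.carrier,
      ‖x‖ ≤ r ∧ ∀ φ ∈ d.1, |φ x - F φ| < 1 / (d.2 + 1) := by
    intro d
    exact goldstine E F d.1 (by positivity)
  choose x hx1 hx2 using hch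
  set f : Finset E.dual.carrier × ℕ → WeakSpace ℝ E.carrier :=
    fun d => toWeakSpace ℝ E.carrier (x d) with hf
  have hle : Filter.map f Filter.atTop ≤ Filter.principal K := by
    rw [Filter.le_principal_iff, Filter.mem_map]
    refine Filter.Eventually.mono (Filter.eventually_true _) fun d _ => ?_
    exact subset_closure ⟨x d, by
      simpa [Metric.mem_closedBall, dist_zero_right] using hx1 d, rfl⟩
  haveI : (Filter.map f Filter.atTop).NeBot := Filter.NeBot.map Filter.atTop_neBot f
  obtain ⟨y, hyK, hy⟩ := hKc hle
  refine ⟨(toWeakSpace ℝ E.carrier).symm y, ?_⟩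
  refine ContinuousLinearMap.ext fun φ => ?_
  have hg : Continuous fun w : WeakSpace ℝ E.carrier =>
      φ ((toWeakSpace ℝ E.carrier).symm w) :=
    WeakBilin.eval_continuous ((topDualPairing ℝ E.carrier).flip) φ
  have htend : Filter.Tendsto (fun d => φ (x d)) Filter.atTop (𝓝 (F φ)) := by
    rw [Metric.tendsto_nhds]
    intro δ hδ
    obtain ⟨N, hN⟩ := exists_nat_one_div_lt (K := ℝ) hδ
    rw [Filter.eventually_atTop]
    refine ⟨({φ}, N), fun d hd => ?_⟩
    have hφd : φ ∈ d.1 := by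
      have := hd.1
      rw [Finset.le_iff_subset] at this
      exact this (Finset.mem_singleton_self φ)
    have h2 : (1 : ℝ) / (d.2 + 1) ≤ 1 / (N + 1) := by
      apply one_div_le_one_div_of_le (by positivity)
      have h3 : (N : ℝ) ≤ (d.2 : ℝ) := by exact_mod_cast hd.2
      linarith
    rw [Real.dist_eq]
    exact lt_of_lt_of_le (hx2 d φ hφd) (le_of_lt (lt_of_le_of_lt h2 hN))
  have hcl : ClusterPt (φ ((toWeakSpace ℝ E.carrier).symm y)) (𝓝 (F φ)) :=
    hy.map hg.continuousAt ((Filter.tendsto_map'_iff).2 htend)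
  exact t2_iff_nhds.mp inferInstance hcl

end Aux

/-- (`n = 2*k ≥ 0` even.)  Suppose every bounded subset of
`B^{(n)}` is relatively weakly compact, `(e_α)` is a bounded net in `A^{(n)}`
which is a bounded left approximate identity for `B^{(n)}` (in norm), and
`e_α B^{(n+2)} ⊆ B^{(n)}` (with `B^{(n)}` canonically embedded in `B^{(n+2)}`)
for every `α`.  Then `B` is reflexive. -/
theorem stmt3
    (A B : Type) [NonUnitalNormedRing A] [NormedSpace ℝ A] [IsScalarTower ℝ A A]
    [SMulCommClass ℝ A A] [CompleteSpace A]
    [NormedAddCommGroup B] [NormedSpace ℝ B] [CompleteSpace B]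
    (πl : A →L[ℝ] B →L[ℝ] B) (πr : B →L[ℝ] A →L[ℝ] B)
    (hπl : ∀ (a a' : A) (b : B), πl (a * a') b = πl a (πl a' b))
    (hπr : ∀ (b : B) (a a' : A), πr b (a * a') = πr (πr b a) a')
    (hπlr : ∀ (a : A) (b : B) (a' : A), πr (πl a b) a' = πl a (πr b a'))
    (k : ℕ)
    (hwc : ∀ s : Set (Bd B k), Bornology.IsBounded s → RelWeaklyCompact (E := (BB.of B).diter k) s)
    {ι : Type} (l : Filter ι) (hl : l.NeBot) (e : ι → Ad A k)
    (hbd : Bornology.IsBounded (Set.range e))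
    (hlai : ∀ b : Bd B k, Filter.Tendsto (fun i => actL A B πl k (e i) b) l (nhds b))
    (hsub : ∀ (i : ι) (b2 : Bd B (k + 1)), ∃ b0 : Bd B k,
        actL A B πl (k + 1) (BB.incl ((BB.of A).diter k) (e i)) b2 =
          BB.incl ((BB.of B).diter k) b0) :
    Function.Surjective (BB.incl (BB.of B)) := by
  have hsurj : Function.Surjective (BB.incl ((BB.of B).diter k)) :=
    surj_of_wc ((BB.of B).diter k) hwc
  exact down k (BB.of B) hsurj
end
end

section
/- Let A be a Banach algebra, B a Banach A-bimodule, and n ≥ 0 an even integer. If A^(n)A^(n+2) ⊆ A^(n)Z^ℓ_{B^(n+2)}(A^(n+2)), then A^(n)A^(n+2) ⊆ Z^ℓ_{B^(n+2)}(A^(n+2)). Here A^(n)A^(n+2) is the set of products a^(n)a^(n+2) in A^(n+2) (first Arens product, A^(n) canonically embedded in A^(n+2)), and A^(n)Z^ℓ_{B^(n+2)}(A^(n+2)) = {a^(n)φ : a^(n) ∈ A^(n), φ ∈ Z^ℓ_{B^(n+2)}(A^(n+2))}. -/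
/-!
Common infrastructure for formalizing "Topological centers of the n-th dual of
module actions" (Haghnejad Azar, Riazi).

We work over `ℝ`.  A Banach algebra is a complete `NonUnitalNormedRing` which is
a normed `ℝ`-algebra; a Banach `A`-bimodule `B` is given by two continuous
bilinear module actions `πl : A →L B →L B`, `πr : B →L A →L B` satisfying the
usual associativity identities.

`BB` bundles a normed `ℝ`-space.  `BB.dual` is the topological dual,
`BB.bst` is the Arens adjoint `m ↦ m^*` of a bounded bilinear map
(`⟨m^*(z',x), y⟩ = ⟨z', m(x,y)⟩`), `BB.arens m = m^{***}` is the first Arens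
extension, `BB.diter E k` is the `2k`-th dual of `E`, and `BB.iterBil m k` is
the `k`-fold iterated first Arens extension of `m` acting on `2k`-th duals.

Even integers `n ≥ 0` (resp. `n ≥ 2`) are represented as `n = 2*k`
(resp. `n = 2*(j+1)`), so that `A^{(n)}` is `Ad A k`, `A^{(n+1)}` is
`((BB.of A).diter k).dual.carrier`, etc.

Weak-star and weak convergence of nets are expressed through filters
(`wsTendsto`, `wTendsto`), and the relevant topological centers and `wap`
spaces become the predicates `MemZlBA`, `MemZlAB`, `MemWapL` below.
-/

noncomputable section

open ContinuousLinearMap Filter Topology Bornology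

lemma assocL_aux
    (A B : Type) [NonUnitalNormedRing A] [NormedSpace ℝ A] [IsScalarTower ℝ A A]
    [SMulCommClass ℝ A A]
    [NormedAddCommGroup B] [NormedSpace ℝ B]
    (πl : A →L[ℝ] B →L[ℝ] B)
    (hπl : ∀ (a a' : A) (b : B), πl (a * a') b = πl a (πl a' b)) :
    ∀ (k : ℕ) (p q : Ad A k) (c : Bd B k),
      actL A B πl k (mulA A k p q) c = actL A B πl k p (actL A B πl k q c) := by
  intro k
  induction k with
  | zero => intro p q c; exact hπl p q c
  | succ k ih =>
    intro p q c
    ext f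
    show p (BB.bst (BB.bst (mulA A k)) q (BB.bst (BB.bst (actL A B πl k)) c f)) =
      p (BB.bst (BB.bst (actL A B πl k)) (BB.arens (actL A B πl k) q c) f)
    congr 1
    ext x
    show q (BB.bst (mulA A k) (BB.bst (BB.bst (actL A B πl k)) c f) x) =
      q (BB.bst (BB.bst (actL A B πl k)) c (BB.bst (actL A B πl k) f x))
    congr 1
    ext y
    show c (BB.bst (actL A B πl k) f (mulA A k x y)) =
      c (BB.bst (actL A B πl k) (BB.bst (actL A B πl k) f x) y)
    congr 1
    ext z
    show f (actL A B πl k (mulA A k x y) z) = f (actL A B πl k x (actL A B πl k y z))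
    rw [ih]

/-- (`n = 2*k ≥ 0` even.)  If
`A^{(n)} A^{(n+2)} ⊆ A^{(n)} Z^ℓ_{B^{(n+2)}}(A^{(n+2)})` then
`A^{(n)} A^{(n+2)} ⊆ Z^ℓ_{B^{(n+2)}}(A^{(n+2)})`. -/
theorem stmt6
    (A B : Type) [NonUnitalNormedRing A] [NormedSpace ℝ A] [IsScalarTower ℝ A A]
    [SMulCommClass ℝ A A] [CompleteSpace A]
    [NormedAddCommGroup B] [NormedSpace ℝ B] [CompleteSpace B]
    (πl : A →L[ℝ] B →L[ℝ] B) (πr : B →L[ℝ] A →L[ℝ] B)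
    (hπl : ∀ (a a' : A) (b : B), πl (a * a') b = πl a (πl a' b))
    (hπr : ∀ (b : B) (a a' : A), πr b (a * a') = πr (πr b a) a')
    (hπlr : ∀ (a : A) (b : B) (a' : A), πr (πl a b) a' = πl a (πr b a'))
    (k : ℕ)
    (h : ∀ (a : Ad A k) (a2 : Ad A (k + 1)), ∃ (x : Ad A k) (φ : Ad A (k + 1)),
        MemZlBA A B πl k φ ∧
          mulA A (k + 1) (BB.incl ((BB.of A).diter k) a) a2 =
            mulA A (k + 1) (BB.incl ((BB.of A).diter k) x) φ) :
    ∀ (a : Ad A k) (a2 : Ad A (k + 1)),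
      MemZlBA A B πl k (mulA A (k + 1) (BB.incl ((BB.of A).diter k) a) a2) := by
  intro a a2
  obtain ⟨x, φ, hφ, heq⟩ := h a a2
  rw [heq]
  intro ι l hl bα b hb f
  have key : ∀ (c : Bd B (k + 1)),
      actL A B πl (k + 1) (mulA A (k + 1) (BB.incl ((BB.of A).diter k) x) φ) c f =
        actL A B πl (k + 1) φ c (BB.bst (actL A B πl k) f x) := by
    intro c
    rw [assocL_aux A B πl hπl (k + 1)]
    rfl
  simp only [key]
  exact hφ l hl bα b hb (BB.bst (actL A B πl k) f x)
end
end

section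
/- Let A be a Banach algebra, B a Banach A-bimodule, and n ≥ 2 an even integer. Suppose there is a_0^(n-2) ∈ A^(n-2) with A^(n) = a_0^(n-2)A^(n) (product of the canonical image of a_0^(n-2) in A^(n) with A^(n) in the first Arens product) such that a_0^(n-2) has the Rw*w-property: for every net (x_α) in A^(n-1) = (A^(n-2))*, if x_α a_0^(n-2) → 0 in the weak* topology of A^(n-1), then x_α a_0^(n-2) → 0 weakly in A^(n-1), where ⟨x a, c⟩ = ⟨x, ac⟩ for x ∈ A^(n-1), a, c ∈ A^(n-2). Then Z^ℓ_{B^(n)}(A^(n)) = A^(n). -/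
/-!
Common infrastructure for formalizing "Topological centers of the n-th dual of
module actions" (Haghnejad Azar, Riazi).

We work over `ℝ`.  A Banach algebra is a complete `NonUnitalNormedRing` which is
a normed `ℝ`-algebra; a Banach `A`-bimodule `B` is given by two continuous
bilinear module actions `πl : A →L B →L B`, `πr : B →L A →L B` satisfying the
usual associativity identities.

`BB` bundles a normed `ℝ`-space.  `BB.dual` is the topological dual,
`BB.bst` is the Arens adjoint `m ↦ m^*` of a bounded bilinear map
(`⟨m^*(z',x), y⟩ = ⟨z', m(x,y)⟩`), `BB.arens m = m^{***}` is the first Arens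
extension, `BB.diter E k` is the `2k`-th dual of `E`, and `BB.iterBil m k` is
the `k`-fold iterated first Arens extension of `m` acting on `2k`-th duals.

Even integers `n ≥ 0` (resp. `n ≥ 2`) are represented as `n = 2*k`
(resp. `n = 2*(j+1)`), so that `A^{(n)}` is `Ad A k`, `A^{(n+1)}` is
`((BB.of A).diter k).dual.carrier`, etc.

Weak-star and weak convergence of nets are expressed through filters
(`wsTendsto`, `wTendsto`), and the relevant topological centers and `wap`
spaces become the predicates `MemZlBA`, `MemZlAB`, `MemWapL` below.
-/

noncomputable section

open ContinuousLinearMap Filter Topology Bornology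

/-- (`n = 2*(j+1) ≥ 2` even.)  If `A^{(n)} = a₀^{(n-2)} A^{(n)}`
for some `a₀^{(n-2)} ∈ A^{(n-2)}` having the `Rw*w`-property (for every net
`(x_α)` in `A^{(n-1)}`, `x_α a₀ → 0` weak-star implies `x_α a₀ → 0` weakly,
where `⟨x a, c⟩ = ⟨x, a c⟩`), then `Z^ℓ_{B^{(n)}}(A^{(n)}) = A^{(n)}`. -/
theorem stmt12
    (A B : Type) [NonUnitalNormedRing A] [NormedSpace ℝ A] [IsScalarTower ℝ A A]
    [SMulCommClass ℝ A A] [CompleteSpace A]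
    [NormedAddCommGroup B] [NormedSpace ℝ B] [CompleteSpace B]
    (πl : A →L[ℝ] B →L[ℝ] B) (πr : B →L[ℝ] A →L[ℝ] B)
    (hπl : ∀ (a a' : A) (b : B), πl (a * a') b = πl a (πl a' b))
    (hπr : ∀ (b : B) (a a' : A), πr b (a * a') = πr (πr b a) a')
    (hπlr : ∀ (a : A) (b : B) (a' : A), πr (πl a b) a' = πl a (πr b a'))
    (j : ℕ) (a0 : Ad A j)
    (hfact : ∀ z : Ad A (j + 1), ∃ x : Ad A (j + 1),
        z = mulA A (j + 1) (BB.incl ((BB.of A).diter j) a0) x)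
    (hRww : ∀ {ι : Type} (l : Filter ι), l.NeBot →
        ∀ xα : ι → ((BB.of A).diter j).dual.carrier,
          wsTendsto (E := (BB.of A).diter j) l (fun i => (xα i).comp (mulA A j a0)) 0 →
          wTendsto (E := ((BB.of A).diter j).dual) l
            (fun i => (xα i).comp (mulA A j a0)) 0) :
    ∀ a : Ad A (j + 1), MemZlBA A B πl j a := by
  intro a ι l hl bα b hb ψ
  obtain ⟨x, hx⟩ := hfact a
  set m := actL A B πl j with hm
  set T : Bd B (j + 1) →L[ℝ] ((BB.of A).diter j).dual.carrier :=
    (BB.bst (BB.bst m)).flip ψ with hT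
  have key : ∀ b'' : Bd B (j + 1),
      actL A B πl (j + 1) a b'' ψ = x ((T b'').comp (mulA A j a0)) := by
    intro b''
    rw [hx]
    rfl
  have hws : wsTendsto (E := (BB.of A).diter j) l
      (fun i => ((T (bα i) - T b).comp (mulA A j a0))) 0 := by
    intro c
    have h1 := hb (BB.bst m ψ (mulA A j a0 c))
    have h2 := h1.sub (tendsto_const_nhds (x := b (BB.bst m ψ (mulA A j a0 c))))
    rw [sub_self] at h2
    simp only [ContinuousLinearMap.sub_apply, ContinuousLinearMap.comp_apply, ContinuousLinearMap.zero_apply]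
    exact h2
  have hw := hRww l hl (fun i => T (bα i) - T b) hws
  have hx0 := hw x
  simp only [map_zero] at hx0
  have heq : ∀ i, actL A B πl (j + 1) a (bα i) ψ
      = x (((T (bα i) - T b).comp (mulA A j a0))) + actL A B πl (j + 1) a b ψ := by
    intro i
    rw [key, key]
    rw [ContinuousLinearMap.sub_comp, map_sub]
    ring
  simp only [heq]
  simpa using hx0.add (tendsto_const_nhds (x := actL A B πl (j + 1) a b ψ))
end
end

section
/- Let A be a Banach algebra, B a Banach A-bimodule, and n ≥ 2 an even integer. Suppose there is a_0^(n-2) ∈ A^(n-2) with A^(n) = A^(n)a_0^(n-2) (product in the first Arens product with a_0^(n-2) canonically embedded in A^(n)) such that a_0^(n-2) has the Lw*w-property: for every net (x_α) in A^(n-1) = (A^(n-2))*, if a_0^(n-2)x_α → 0 in the weak* topology of A^(n-1), then a_0^(n-2)x_α → 0 weakly in A^(n-1), where ⟨a x, c⟩ = ⟨x, ca⟩ for x ∈ A^(n-1), a, c ∈ A^(n-2). Then Z^ℓ_{B^(n)}(A^(n)) = A^(n). -/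
/-!
Common infrastructure for formalizing "Topological centers of the n-th dual of
module actions" (Haghnejad Azar, Riazi).

We work over `ℝ`.  A Banach algebra is a complete `NonUnitalNormedRing` which is
a normed `ℝ`-algebra; a Banach `A`-bimodule `B` is given by two continuous
bilinear module actions `πl : A →L B →L B`, `πr : B →L A →L B` satisfying the
usual associativity identities.

`BB` bundles a normed `ℝ`-space.  `BB.dual` is the topological dual,
`BB.bst` is the Arens adjoint `m ↦ m^*` of a bounded bilinear map
(`⟨m^*(z',x), y⟩ = ⟨z', m(x,y)⟩`), `BB.arens m = m^{***}` is the first Arens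
extension, `BB.diter E k` is the `2k`-th dual of `E`, and `BB.iterBil m k` is
the `k`-fold iterated first Arens extension of `m` acting on `2k`-th duals.

Even integers `n ≥ 0` (resp. `n ≥ 2`) are represented as `n = 2*k`
(resp. `n = 2*(j+1)`), so that `A^{(n)}` is `Ad A k`, `A^{(n+1)}` is
`((BB.of A).diter k).dual.carrier`, etc.

Weak-star and weak convergence of nets are expressed through filters
(`wsTendsto`, `wTendsto`), and the relevant topological centers and `wap`
spaces become the predicates `MemZlBA`, `MemZlAB`, `MemWapL` below.
-/

noncomputable section

open ContinuousLinearMap Filter Topology Bornology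

/-- (`n = 2*(j+1) ≥ 2` even.)  If `A^{(n)} = A^{(n)} a₀^{(n-2)}`
for some `a₀^{(n-2)} ∈ A^{(n-2)}` having the `Lw*w`-property (for every net
`(x_α)` in `A^{(n-1)}`, `a₀ x_α → 0` weak-star implies `a₀ x_α → 0` weakly,
where `⟨a x, c⟩ = ⟨x, c a⟩`), then `Z^ℓ_{B^{(n)}}(A^{(n)}) = A^{(n)}`. -/
theorem stmt13
    (A B : Type) [NonUnitalNormedRing A] [NormedSpace ℝ A] [IsScalarTower ℝ A A]
    [SMulCommClass ℝ A A] [CompleteSpace A]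
    [NormedAddCommGroup B] [NormedSpace ℝ B] [CompleteSpace B]
    (πl : A →L[ℝ] B →L[ℝ] B) (πr : B →L[ℝ] A →L[ℝ] B)
    (hπl : ∀ (a a' : A) (b : B), πl (a * a') b = πl a (πl a' b))
    (hπr : ∀ (b : B) (a a' : A), πr b (a * a') = πr (πr b a) a')
    (hπlr : ∀ (a : A) (b : B) (a' : A), πr (πl a b) a' = πl a (πr b a'))
    (j : ℕ) (a0 : Ad A j)
    (hfact : ∀ z : Ad A (j + 1), ∃ x : Ad A (j + 1),
        z = mulA A (j + 1) x (BB.incl ((BB.of A).diter j) a0))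
    (hLww : ∀ {ι : Type} (l : Filter ι), l.NeBot →
        ∀ xα : ι → ((BB.of A).diter j).dual.carrier,
          wsTendsto (E := (BB.of A).diter j) l
            (fun i => (xα i).comp ((mulA A j).flip a0)) 0 →
          wTendsto (E := ((BB.of A).diter j).dual) l
            (fun i => (xα i).comp ((mulA A j).flip a0)) 0) :
    ∀ a : Ad A (j + 1), MemZlBA A B πl j a := by
  intro z ι l hl bα b hb z'
  obtain ⟨x, hx⟩ := hfact z
  set m := actL A B πl j with hm
  set π := mulA A j with hπ
  -- Key identity: ⟨z ⬝ b'', z'⟩ = ⟨x, (m**(b'', z')) ∘ (· a0)⟩.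
  have key : ∀ b'' : Bd B (j + 1),
      actL A B πl (j + 1) z b'' z'
        = x ((BB.bst (BB.bst m) b'' z').comp (π.flip a0)) := by
    intro b''
    rw [hx]
    show x (BB.bst (BB.bst π) (BB.incl ((BB.of A).diter j) a0)
        (BB.bst (BB.bst m) b'' z')) = _
    congr 1
  -- The net xα in A^{(n-1)} to which we apply the Lw*w-property of a0.
  have hws : wsTendsto (E := (BB.of A).diter j) l
      (fun i => ((BB.bst (BB.bst m) (bα i) z' - BB.bst (BB.bst m) b z').comp
        (π.flip a0))) 0 := by
    intro a
    have h := hb (BB.bst m z' (π.flip a0 a))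
    simp only [ContinuousLinearMap.comp_apply, ContinuousLinearMap.sub_apply,
      ContinuousLinearMap.zero_apply]
    exact tendsto_sub_nhds_zero_iff.mpr h
  have hw := hLww l hl
    (fun i => BB.bst (BB.bst m) (bα i) z' - BB.bst (BB.bst m) b z') hws
  have hx' := hw x
  simp only [ContinuousLinearMap.sub_comp, map_sub, map_zero] at hx'
  have hgoal : Tendsto
      (fun i => x ((BB.bst (BB.bst m) (bα i) z').comp (π.flip a0))) l
      (𝓝 (x ((BB.bst (BB.bst m) b z').comp (π.flip a0)))) :=
    tendsto_sub_nhds_zero_iff.mp hx'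
  rw [key b]
  have hfun : (fun i => actL A B πl (j + 1) z (bα i) z')
      = fun i => x ((BB.bst (BB.bst m) (bα i) z').comp (π.flip a0)) :=
    funext fun i => key (bα i)
  rw [hfun]
  exact hgoal
end
end

section
/- Let A be a Banach algebra, B a Banach A-bimodule, and n ≥ 2 an even integer. Suppose there is a_0^(n-2) ∈ A^(n-2) with B^(n) = a_0^(n-2)B^(n) (left module action of the canonical image of a_0^(n-2) in A^(n) on B^(n)) such that a_0^(n-2) has the Rw*w-property with respect to B: for every net (y_α) in B^(n-1) = (B^(n-2))*, if y_α a_0^(n-2) → 0 in the weak* topology of B^(n-1), then y_α a_0^(n-2) → 0 weakly in B^(n-1), where the right action of A^(n-2) on B^(n-1) is given by ⟨y a, b⟩ = ⟨y, ab⟩ for y ∈ B^(n-1), a ∈ A^(n-2), b ∈ B^(n-2). Then Z^ℓ_{A^(n)}(B^(n)) = B^(n). -/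
/-!
Common infrastructure for formalizing "Topological centers of the n-th dual of
module actions" (Haghnejad Azar, Riazi).

We work over `ℝ`.  A Banach algebra is a complete `NonUnitalNormedRing` which is
a normed `ℝ`-algebra; a Banach `A`-bimodule `B` is given by two continuous
bilinear module actions `πl : A →L B →L B`, `πr : B →L A →L B` satisfying the
usual associativity identities.

`BB` bundles a normed `ℝ`-space.  `BB.dual` is the topological dual,
`BB.bst` is the Arens adjoint `m ↦ m^*` of a bounded bilinear map
(`⟨m^*(z',x), y⟩ = ⟨z', m(x,y)⟩`), `BB.arens m = m^{***}` is the first Arens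
extension, `BB.diter E k` is the `2k`-th dual of `E`, and `BB.iterBil m k` is
the `k`-fold iterated first Arens extension of `m` acting on `2k`-th duals.

Even integers `n ≥ 0` (resp. `n ≥ 2`) are represented as `n = 2*k`
(resp. `n = 2*(j+1)`), so that `A^{(n)}` is `Ad A k`, `A^{(n+1)}` is
`((BB.of A).diter k).dual.carrier`, etc.

Weak-star and weak convergence of nets are expressed through filters
(`wsTendsto`, `wTendsto`), and the relevant topological centers and `wap`
spaces become the predicates `MemZlBA`, `MemZlAB`, `MemWapL` below.
-/

noncomputable section

open ContinuousLinearMap Filter Topology Bornology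

/-- (`n = 2*(j+1) ≥ 2` even.)  If `B^{(n)} = a₀^{(n-2)} B^{(n)}`
for some `a₀^{(n-2)} ∈ A^{(n-2)}` having the `Rw*w`-property with respect to `B`
(for every net `(y_α)` in `B^{(n-1)}`, `y_α a₀ → 0` weak-star implies
`y_α a₀ → 0` weakly, where `⟨y a, b⟩ = ⟨y, a b⟩`), then
`Z^ℓ_{A^{(n)}}(B^{(n)}) = B^{(n)}`. -/
theorem stmt14
    (A B : Type) [NonUnitalNormedRing A] [NormedSpace ℝ A] [IsScalarTower ℝ A A]
    [SMulCommClass ℝ A A] [CompleteSpace A]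
    [NormedAddCommGroup B] [NormedSpace ℝ B] [CompleteSpace B]
    (πl : A →L[ℝ] B →L[ℝ] B) (πr : B →L[ℝ] A →L[ℝ] B)
    (hπl : ∀ (a a' : A) (b : B), πl (a * a') b = πl a (πl a' b))
    (hπr : ∀ (b : B) (a a' : A), πr b (a * a') = πr (πr b a) a')
    (hπlr : ∀ (a : A) (b : B) (a' : A), πr (πl a b) a' = πl a (πr b a'))
    (j : ℕ) (a0 : Ad A j)
    (hfact : ∀ w : Bd B (j + 1), ∃ v : Bd B (j + 1),
        w = actL A B πl (j + 1) (BB.incl ((BB.of A).diter j) a0) v)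
    (hRww : ∀ {ι : Type} (l : Filter ι), l.NeBot →
        ∀ yα : ι → ((BB.of B).diter j).dual.carrier,
          wsTendsto (E := (BB.of B).diter j) l
            (fun i => (yα i).comp (actL A B πl j a0)) 0 →
          wTendsto (E := ((BB.of B).diter j).dual) l
            (fun i => (yα i).comp (actL A B πl j a0)) 0) :
    ∀ b : Bd B (j + 1), MemZlAB A B πr j b := by
  intro b ι l hl aα a haα z'
  obtain ⟨v, hv⟩ := hfact b
  set m := actR A B πr j with hm
  set g := actL A B πl j a0 with hg
  -- `b φ = v (φ ∘ g)` for every `φ`.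
  have hb : ∀ φ : ((BB.of B).diter j).dual.carrier,
      b φ = v (φ.comp g) := by
    intro φ
    rw [hv]; rfl
  set yα : ι → ((BB.of B).diter j).dual.carrier :=
    fun i => BB.bst (BB.bst m) (aα i - a) z' with hyα
  have hws : wsTendsto (E := (BB.of B).diter j) l
      (fun i => (yα i).comp g) 0 := by
    intro x
    have h1 : Tendsto (fun i => (aα i - a) (BB.bst m z' (g x))) l (𝓝 0) := by
      have := (haα (BB.bst m z' (g x))).sub
        (tendsto_const_nhds (x := a (BB.bst m z' (g x))))
      simpa using this
    have hx : ∀ i, (yα i).comp g x = (aα i - a) (BB.bst m z' (g x)) := by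
      intro i; rfl
    have h0 : (0 : ((BB.of B).diter j).dual.carrier) x = 0 := rfl
    rw [h0]
    simpa only [hx] using h1
  have hw := hRww l hl yα hws
  have hv2 : Tendsto (fun i => v ((yα i).comp g)) l (𝓝 0) := by
    have := hw v
    simpa using this
  -- Now relate to the goal.
  have key : ∀ i, actR A B πr (j + 1) b (aα i) z'
      = actR A B πr (j + 1) b a z' + v ((yα i).comp g) := by
    intro i
    have e1 : actR A B πr (j + 1) b (aα i) z'
        = b (BB.bst (BB.bst m) (aα i) z') := rfl
    have e2 : actR A B πr (j + 1) b a z'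
        = b (BB.bst (BB.bst m) a z') := rfl
    have e3 : BB.bst (BB.bst m) (aα i - a) z'
        = BB.bst (BB.bst m) (aα i) z' - BB.bst (BB.bst m) a z' := by
      rw [(BB.bst (BB.bst m)).map_sub, ContinuousLinearMap.sub_apply]
    have e4 : v ((yα i).comp g) = b (BB.bst (BB.bst m) (aα i - a) z') :=
      (hb _).symm
    rw [e1, e2, e4, e3, b.map_sub]
    ring
  have : Tendsto (fun i => actR A B πr (j + 1) b a z' + v ((yα i).comp g)) l
      (𝓝 (actR A B πr (j + 1) b a z' + 0)) :=
    tendsto_const_nhds.add hv2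
  rw [add_zero] at this
  simpa only [key] using this
end
end

section
/- Let A be a Banach algebra, B a Banach A-bimodule, and n ≥ 2 an even integer. Suppose there is a_0^(n-2) ∈ A^(n-2) with B^(n) = B^(n)a_0^(n-2) (right module action of the canonical image of a_0^(n-2) in A^(n) on B^(n)) such that a_0^(n-2) has the Lw*w-property with respect to B: for every net (y_α) in B^(n-1) = (B^(n-2))*, if a_0^(n-2)y_α → 0 in the weak* topology of B^(n-1), then a_0^(n-2)y_α → 0 weakly in B^(n-1), where the left action of A^(n-2) on B^(n-1) is given by ⟨a y, b⟩ = ⟨y, ba⟩ for y ∈ B^(n-1), a ∈ A^(n-2), b ∈ B^(n-2). Then Z^ℓ_{A^(n)}(B^(n)) = B^(n). -/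
/-!
Common infrastructure for formalizing "Topological centers of the n-th dual of
module actions" (Haghnejad Azar, Riazi).

We work over `ℝ`.  A Banach algebra is a complete `NonUnitalNormedRing` which is
a normed `ℝ`-algebra; a Banach `A`-bimodule `B` is given by two continuous
bilinear module actions `πl : A →L B →L B`, `πr : B →L A →L B` satisfying the
usual associativity identities.

`BB` bundles a normed `ℝ`-space.  `BB.dual` is the topological dual,
`BB.bst` is the Arens adjoint `m ↦ m^*` of a bounded bilinear map
(`⟨m^*(z',x), y⟩ = ⟨z', m(x,y)⟩`), `BB.arens m = m^{***}` is the first Arens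
extension, `BB.diter E k` is the `2k`-th dual of `E`, and `BB.iterBil m k` is
the `k`-fold iterated first Arens extension of `m` acting on `2k`-th duals.

Even integers `n ≥ 0` (resp. `n ≥ 2`) are represented as `n = 2*k`
(resp. `n = 2*(j+1)`), so that `A^{(n)}` is `Ad A k`, `A^{(n+1)}` is
`((BB.of A).diter k).dual.carrier`, etc.

Weak-star and weak convergence of nets are expressed through filters
(`wsTendsto`, `wTendsto`), and the relevant topological centers and `wap`
spaces become the predicates `MemZlBA`, `MemZlAB`, `MemWapL` below.
-/

noncomputable section

open ContinuousLinearMap Filter Topology Bornology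

/-- (`n = 2*(j+1) ≥ 2` even.)  If `B^{(n)} = B^{(n)} a₀^{(n-2)}`
for some `a₀^{(n-2)} ∈ A^{(n-2)}` having the `Lw*w`-property with respect to `B`
(for every net `(y_α)` in `B^{(n-1)}`, `a₀ y_α → 0` weak-star implies
`a₀ y_α → 0` weakly, where `⟨a y, b⟩ = ⟨y, b a⟩`), then
`Z^ℓ_{A^{(n)}}(B^{(n)}) = B^{(n)}`. -/
theorem stmt15
    (A B : Type) [NonUnitalNormedRing A] [NormedSpace ℝ A] [IsScalarTower ℝ A A]
    [SMulCommClass ℝ A A] [CompleteSpace A]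
    [NormedAddCommGroup B] [NormedSpace ℝ B] [CompleteSpace B]
    (πl : A →L[ℝ] B →L[ℝ] B) (πr : B →L[ℝ] A →L[ℝ] B)
    (hπl : ∀ (a a' : A) (b : B), πl (a * a') b = πl a (πl a' b))
    (hπr : ∀ (b : B) (a a' : A), πr b (a * a') = πr (πr b a) a')
    (hπlr : ∀ (a : A) (b : B) (a' : A), πr (πl a b) a' = πl a (πr b a'))
    (j : ℕ) (a0 : Ad A j)
    (hfact : ∀ w : Bd B (j + 1), ∃ v : Bd B (j + 1),
        w = actR A B πr (j + 1) v (BB.incl ((BB.of A).diter j) a0))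
    (hLww : ∀ {ι : Type} (l : Filter ι), l.NeBot →
        ∀ yα : ι → ((BB.of B).diter j).dual.carrier,
          wsTendsto (E := (BB.of B).diter j) l
            (fun i => (yα i).comp ((actR A B πr j).flip a0)) 0 →
          wTendsto (E := ((BB.of B).diter j).dual) l
            (fun i => (yα i).comp ((actR A B πr j).flip a0)) 0) :
    ∀ b : Bd B (j + 1), MemZlAB A B πr j b := by
  intro b ι l hl aα a ha z'
  obtain ⟨v, hv⟩ := hfact b
  set m := actR A B πr j with hm
  set f : ((BB.of B).diter j).carrier →L[ℝ] ((BB.of B).diter j).carrier :=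
    m.flip a0 with hf
  set X := BB.bst (BB.bst m) with hX
  have hbst : ∀ (φ : ((BB.of B).diter j).dual.carrier),
      X (BB.incl ((BB.of A).diter j) a0) φ = φ.comp f := fun φ => rfl
  have hb : ∀ φ, b φ = v (φ.comp f) := by
    intro φ
    rw [hv]
    show v (X (BB.incl _ a0) φ) = v (φ.comp f)
    rw [hbst]
  have hws : wsTendsto (E := (BB.of B).diter j) l
      (fun i => (X (aα i) z' - X a z').comp f) 0 := by
    intro x
    have h1 := ha (BB.bst m z' (m x a0))
    have e : (fun i => ((X (aα i) z' - X a z').comp f) x)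
        = fun i => aα i (BB.bst m z' (m x a0)) - a (BB.bst m z' (m x a0)) := by
      funext i
      simp only [ContinuousLinearMap.comp_apply, ContinuousLinearMap.sub_apply]
      rfl
    rw [e]
    simpa using h1.sub_const (a (BB.bst m z' (m x a0)))
  have hw := hLww l hl (fun i => X (aα i) z' - X a z') hws v
  have key : ∀ i, v ((X (aα i) z' - X a z').comp f)
      = actR A B πr (j+1) b (aα i) z' - actR A B πr (j+1) b a z' := by
    intro i
    have e : (X (aα i) z' - X a z').comp f
        = (X (aα i) z').comp f - (X a z').comp f :=
      ContinuousLinearMap.sub_comp _ _ _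
    rw [e, map_sub]
    have e1 : actR A B πr (j+1) b (aα i) z' = b (X (aα i) z') := rfl
    have e2 : actR A B πr (j+1) b a z' = b (X a z') := rfl
    rw [e1, e2, hb, hb]
  have h0 : Tendsto (fun i => actR A B πr (j+1) b (aα i) z'
      - actR A B πr (j+1) b a z') l (𝓝 0) := by
    have := hw
    simp only [key] at this
    simpa using this
  simpa using h0.add_const (actR A B πr (j+1) b a z')
end
end

section
/- Let A be a Banach algebra and B a left Banach A-module, and suppose e ∈ A satisfies eb = b for all b ∈ B. If e has the w*w-property with respect to B — in particular, for every net (b'_α) in B*, b'_α e → 0 in the weak* topology of B* implies b'_α e → 0 weakly in B*, where ⟨b' e, b⟩ = ⟨b', eb⟩ — then B is reflexive. -/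
/-!
Common infrastructure for formalizing "Topological centers of the n-th dual of
module actions" (Haghnejad Azar, Riazi).

We work over `ℝ`.  A Banach algebra is a complete `NonUnitalNormedRing` which is
a normed `ℝ`-algebra; a Banach `A`-bimodule `B` is given by two continuous
bilinear module actions `πl : A →L B →L B`, `πr : B →L A →L B` satisfying the
usual associativity identities.

`BB` bundles a normed `ℝ`-space.  `BB.dual` is the topological dual,
`BB.bst` is the Arens adjoint `m ↦ m^*` of a bounded bilinear map
(`⟨m^*(z',x), y⟩ = ⟨z', m(x,y)⟩`), `BB.arens m = m^{***}` is the first Arens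
extension, `BB.diter E k` is the `2k`-th dual of `E`, and `BB.iterBil m k` is
the `k`-fold iterated first Arens extension of `m` acting on `2k`-th duals.

Even integers `n ≥ 0` (resp. `n ≥ 2`) are represented as `n = 2*k`
(resp. `n = 2*(j+1)`), so that `A^{(n)}` is `Ad A k`, `A^{(n+1)}` is
`((BB.of A).diter k).dual.carrier`, etc.

Weak-star and weak convergence of nets are expressed through filters
(`wsTendsto`, `wTendsto`), and the relevant topological centers and `wap`
spaces become the predicates `MemZlBA`, `MemZlAB`, `MemWapL` below.
-/

noncomputable section

open ContinuousLinearMap Filter Topology Bornology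

/-- Let `B` be a left Banach `A`-module and `e ∈ A` with
`e b = b` for all `b ∈ B`.  If `e` has the `w*w`-property with respect to `B`
(in particular: for every net `(b'_α)` in `B^*`, `b'_α e → 0` weak-star implies
`b'_α e → 0` weakly, where `⟨b' e, b⟩ = ⟨b', e b⟩`), then `B` is reflexive. -/
theorem stmt17 (A B : Type) [NonUnitalNormedRing A] [NormedSpace ℝ A] [IsScalarTower ℝ A A]
    [SMulCommClass ℝ A A] [CompleteSpace A]
    [NormedAddCommGroup B] [NormedSpace ℝ B] [CompleteSpace B]
    (πl : A →L[ℝ] B →L[ℝ] B)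
    (hπl : ∀ (a a' : A) (b : B), πl (a * a') b = πl a (πl a' b))
    (e : A) (he : ∀ b : B, πl e b = b)
    (hww : ∀ {ι : Type} (l : Filter ι), l.NeBot → ∀ b'α : ι → (B →L[ℝ] ℝ),
        wsTendsto (E := BB.of B) l (fun i => (b'α i).comp (πl e)) 0 →
        wTendsto (E := (BB.of B).dual) l (fun i => (b'α i).comp (πl e)) 0) :
    Function.Surjective (BB.incl (BB.of B)) := by
  intro Φ
  classical
  -- Step 1: Φ is weak-star continuous at 0 on B*.
  have hcomp : ∀ ψ : B →L[ℝ] ℝ, ψ.comp (πl e) = ψ := by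
    intro ψ; ext x; simp [he]
  have key : Filter.Tendsto (fun ψ : WeakDual ℝ B => Φ (show B →L[ℝ] ℝ from ψ))
      (𝓝 0) (𝓝 0) := by
    have h2 : wsTendsto (E := BB.of B) (𝓝 (0 : WeakDual ℝ B))
        (fun ψ => (show B →L[ℝ] ℝ from ψ).comp (πl e)) 0 := by
      intro x
      simp only [hcomp, ContinuousLinearMap.zero_apply]
      refine Filter.Tendsto.congr (fun ψ : WeakDual ℝ B => (DFunLike.congr_fun (hcomp ψ) x).symm) ?_
      exact (WeakDual.eval_continuous (𝕜 := ℝ) (E := B) x).tendsto 0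
    have h1 := hww (𝓝 (0 : WeakDual ℝ B)) inferInstance
      (fun ψ => (show B →L[ℝ] ℝ from ψ)) h2 Φ
    simp only [hcomp, map_zero] at h1
    exact h1.congr (fun ψ => congrArg Φ (hcomp ψ))
  -- Step 2: extract a finite set s ⊆ B controlling Φ.
  have hb := LinearMap.hasBasis_weakBilin (topDualPairing ℝ B)
  have hmem : (fun ψ : WeakDual ℝ B => Φ (show B →L[ℝ] ℝ from ψ)) ⁻¹' Metric.ball 0 1
      ∈ 𝓝 (0 : WeakDual ℝ B) := key (Metric.ball_mem_nhds 0 one_pos)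
  obtain ⟨U, hU, hUsub⟩ := hb.mem_iff.1 hmem
  obtain ⟨s, r, hr, rfl⟩ := (SeminormFamily.basisSets_iff _).1 hU
  -- Step 3: ψ vanishing on s implies Φ ψ = 0.
  have hker : ∀ ψ : B →L[ℝ] ℝ, (∀ x ∈ s, ψ x = 0) → Φ ψ = 0 := by
    intro ψ hψ
    by_contra hne
    set t : ℝ := 2 / |Φ ψ| with ht
    have hΦpos : 0 < |Φ ψ| := abs_pos.2 hne
    have htpos : 0 < t := div_pos two_pos hΦpos
    have hball : (show WeakDual ℝ B from t • ψ) ∈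
        Seminorm.ball (s.sup ((topDualPairing ℝ B).toSeminormFamily)) 0 r := by
      refine (Seminorm.mem_ball_zero (p := s.sup ((topDualPairing ℝ B).toSeminormFamily))
        (y := (show WeakDual ℝ B from t • ψ))).2 ?_
      refine Seminorm.finset_sup_apply_lt hr ?_
      intro x hx
      have h0 : ((topDualPairing ℝ B).toSeminormFamily x)
          (show WeakDual ℝ B from t • ψ) = 0 := by
        show ‖(topDualPairing ℝ B) (show B →L[ℝ] ℝ from t • ψ) x‖ = 0
        have : (topDualPairing ℝ B) (show B →L[ℝ] ℝ from t • ψ) x = t * ψ x := rfl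
        rw [this, hψ x hx, mul_zero, norm_zero]
      exact lt_of_le_of_lt h0.le hr
    have := hUsub hball
    simp only [Set.mem_preimage, Metric.mem_ball, Real.dist_eq, sub_zero] at this
    have heval : Φ (show B →L[ℝ] ℝ from (show WeakDual ℝ B from t • ψ)) = t * Φ ψ := by
      have : (show B →L[ℝ] ℝ from (show WeakDual ℝ B from t • ψ)) = t • ψ := rfl
      rw [this, map_smul, smul_eq_mul]
    have this : dist (Φ (show B →L[ℝ] ℝ from (show WeakDual ℝ B from t • ψ))) 0 < 1 := this
    rw [Real.dist_eq, sub_zero] at this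
    rw [heval, abs_mul, abs_of_pos htpos, ht, div_mul_cancel₀ 2 (ne_of_gt hΦpos)] at this
    linarith
  -- Step 4: Φ is in the span of evaluations at points of s.
  have hspan : (Φ : (B →L[ℝ] ℝ) →ₗ[ℝ] ℝ) ∈ Submodule.span ℝ
      (Set.range (fun x : s => (topDualPairing ℝ B).flip (x : B))) := by
    apply mem_span_of_iInf_ker_le_ker
    intro ψ hψ
    simp only [Submodule.mem_iInf, LinearMap.mem_ker, LinearMap.flip_apply,
      topDualPairing_apply] at hψ
    exact hker ψ (fun x hx => hψ ⟨x, hx⟩)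
  obtain ⟨c, hc⟩ := (Submodule.mem_span_range_iff_exists_fun ℝ).1 hspan
  refine ⟨∑ i : s, c i • (i : B), ?_⟩
  ext ψ
  have := LinearMap.congr_fun hc ψ
  simp only [LinearMap.coe_sum, Finset.sum_apply, LinearMap.smul_apply,
    LinearMap.flip_apply, topDualPairing_apply, smul_eq_mul,
    ContinuousLinearMap.coe_coe] at this
  show ψ (∑ i : s, c i • (i : B)) = Φ ψ
  rw [map_sum]
  simp only [map_smul, smul_eq_mul]
  exact this
end
end
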